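/- The point P₁ = (s²/12, s²/2) on the elliptic curve C_s : y² = x³ + a(s)x + b(s) (with a, b as specified) has order exactly 3 in the group law, provided s ∉ {0, 27} (so that C_s is smooth). -/

import Mathlib

open WeierstrassCurve

/-- The family C_s : y² = x³ + a(s)x + b(s) of torus type. -/
noncomputable def Ctorus (s : ℚ) : Affine ℚ :=
  { a₁ := 0, a₂ := 0, a₃ := 0,
    a₄ := -s ^ 4 / 48 + s ^ 3 / 2,
    a₆ := -s ^ 5 / 24 + s ^ 4 / 4 + s ^ 6 / 864 }

/-- The point P₁ = (s²/12, s²/2) on C_s has order exactly 3 for s ≠ 0, 27. -/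
theorem stmt2 (s : ℚ) (h0 : s ≠ 0) (h27 : s ≠ 27) :
    ∃ h : (Ctorus s).Nonsingular (s ^ 2 / 12) (s ^ 2 / 2),
      addOrderOf (Affine.Point.some _ _ h) = 3 := by
  have hs2 : s ^ 2 ≠ 0 := pow_ne_zero _ h0
  have h : (Ctorus s).Nonsingular (s ^ 2 / 12) (s ^ 2 / 2) := by
    rw [Affine.nonsingular_iff, Affine.equation_iff]
    constructor
    · simp only [Ctorus]; field_simp; ring
    · right
      simp only [Ctorus, Affine.negY]
      intro hc
      apply hs2
      linarith [hc]
  refine ⟨h, ?_⟩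
  have hy : (s ^ 2 / 2 : ℚ) ≠ (Ctorus s).negY (s ^ 2 / 12) (s ^ 2 / 2) := by
    simp only [Ctorus, Affine.negY]
    intro hc; apply hs2; linarith [hc]
  have hdbl : Affine.Point.some _ _ h + Affine.Point.some _ _ h = -(Affine.Point.some _ _ h) := by
    rw [Affine.Point.add_self_of_Y_ne' hy, Affine.Point.neg_some, Affine.Point.neg_some]
    have hslope : (Ctorus s).slope (s ^ 2 / 12) (s ^ 2 / 12) (s ^ 2 / 2) (s ^ 2 / 2) = s / 2 := by
      rw [Affine.slope_of_Y_ne rfl hy]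
      simp only [Ctorus, Affine.negY]
      field_simp
      ring
    have hx : (Ctorus s).addX (s ^ 2 / 12) (s ^ 2 / 12)
        ((Ctorus s).slope (s ^ 2 / 12) (s ^ 2 / 12) (s ^ 2 / 2) (s ^ 2 / 2)) = s ^ 2 / 12 := by
      rw [hslope]; simp only [Ctorus, Affine.addX]; ring
    have hy3 : (Ctorus s).negAddY (s ^ 2 / 12) (s ^ 2 / 12) (s ^ 2 / 2)
        ((Ctorus s).slope (s ^ 2 / 12) (s ^ 2 / 12) (s ^ 2 / 2) (s ^ 2 / 2)) = s ^ 2 / 2 := by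
      rw [Affine.negAddY, hx]; ring
    congr 1
    all_goals first
      | exact hx
      | exact proof_irrel_heq _ _
      | (rw [Affine.negAddY, hx, hslope]; simp only [Ctorus, Affine.negY]; ring)
  have h3 : (3 : ℕ) • Affine.Point.some _ _ h = 0 := by
    rw [succ_nsmul, two_nsmul, hdbl, neg_add_cancel]
  have := Fact.mk (Nat.prime_three)
  exact addOrderOf_eq_prime h3 (Affine.Point.some_ne_zero h)
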